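/- Let K be a commutative ring that is a ℚ-algebra, equipped with a family (d_i)_{i ∈ Δ} of derivations, and assume K is simple (its only Δ-ideals are (0) and K). Let C = {λ ∈ K : d_i λ = 0 for all i} be its field of constants (a field by simplicity; assume it is a field), and assume there exists a C-algebra homomorphism φ : K → C. Let A be a commutative C-algebra, equip A ⊗_C K with the derivations (D_i) characterized by D_i(a ⊗ λ) = a ⊗ d_i(λ), and let i : A → A ⊗_C K, a ↦ a ⊗ 1. Then for every prime ideal 𝔭 of A, the ideal of A ⊗_C K generated by i(𝔭) is a prime ideal and a Δ-ideal. -/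

import Mathlib

open scoped TensorProduct

set_option synthInstance.maxHeartbeats 1000000
set_option maxHeartbeats 1000000
set_option maxHeartbeats 2000000

/-- The subring of constants of a commutative ring equipped with a family of
derivations. -/
def constants {K Δ : Type*} [CommRing K] (d : Δ → Derivation ℤ K K) : Subring K where
  carrier := {x : K | ∀ i, d i x = 0}
  zero_mem' := fun i => map_zero (d i)
  one_mem' := fun i => (d i).map_one_eq_zero
  add_mem' := fun ha hb i => by rw [map_add, ha i, hb i, add_zero]
  neg_mem' := fun ha i => by rw [map_neg, ha i, neg_zero]
  mul_mem' := fun {a b} ha hb i => by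
    rw [(d i).leibniz, ha i, hb i, smul_zero, smul_zero, add_zero]

/-- The canonical map `i : A → A ⊗_C K`, `a ↦ a ⊗ 1`. -/
noncomputable def inclLeft (C : Type*) [CommRing C] (A K : Type*) [CommRing A]
    [CommRing K] [Algebra C A] [Algebra C K] : A →+* A ⊗[C] K :=
  Algebra.TensorProduct.includeLeftRingHom



section Simple
variable {R : Type*} [CommRing R]

lemma deriv_step (δ : Derivation ℤ R R) (x : R) (a b : ℕ)
    (h : x ^ (a + 1) * δ x ^ (2 * b + 1) = 0) :
    (a + 1) • (x ^ a * δ x ^ (2 * b + 3)) = 0 := by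
  have key : (a + 1) • (x ^ a * δ x ^ (2 * b + 3)) =
      (δ (x ^ (a + 1) * δ x ^ (2 * b + 1))) * δ x
      - (2 * b + 1) • ((x ^ (a + 1) * δ x ^ (2 * b + 1)) * δ (δ x)) := by
    rw [Derivation.leibniz, Derivation.leibniz_pow, Derivation.leibniz_pow]
    simp only [smul_eq_mul, Nat.add_sub_cancel]
    ring
  rw [key, h, map_zero]
  simp

lemma deriv_nilpotent (δ : Derivation ℤ R R)
    (htf : ∀ n : ℕ, 0 < n → ∀ x : R, n • x = 0 → x = 0)
    {x : R} (hx : IsNilpotent x) : IsNilpotent (δ x) := by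
  obtain ⟨n, hn⟩ := hx
  have hx' : x ^ (n + 1) = 0 := by rw [pow_succ, hn, zero_mul]
  -- show ∀ b ≤ n, x ^ (n - b) * δ x ^ (2 * b + 1) = 0
  have main : ∀ b, b ≤ n → x ^ (n - b) * δ x ^ (2 * b + 1) = 0 := by
    intro b
    induction b with
    | zero =>
      intro _
      have h1 := congrArg δ hx'
      rw [map_zero, Derivation.leibniz_pow, Nat.add_sub_cancel] at h1
      have h2 : (n + 1) • (x ^ n * δ x) = 0 := by simpa using h1
      have := htf (n + 1) (Nat.succ_pos n) _ h2
      simpa [pow_one] using this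
    | succ b ih =>
      intro hb
      have hb' : b ≤ n := Nat.le_of_succ_le hb
      have ihb := ih hb'
      have hsub : n - b = (n - (b + 1)) + 1 := by omega
      rw [hsub] at ihb
      have := deriv_step δ x (n - (b + 1)) b ihb
      have h0 := htf _ (Nat.succ_pos _) _ this
      have : 2 * (b + 1) + 1 = 2 * b + 3 := by ring
      rw [this]
      exact h0
  have := main n le_rfl
  rw [Nat.sub_self, pow_zero, one_mul] at this
  exact ⟨2 * n + 1, this⟩

lemma simple_isDomain {Δ : Type*} [Nontrivial R] (d : Δ → Derivation ℤ R R)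
    (htf : ∀ n : ℕ, 0 < n → ∀ x : R, n • x = 0 → x = 0)
    (hs : ∀ I : Ideal R, (∀ i, ∀ x ∈ I, d i x ∈ I) → I = ⊥ ∨ I = ⊤) :
    IsDomain R := by
  have hred : IsReduced R := by
    rcases hs (nilradical R) (fun i x hx => by
      rw [mem_nilradical] at hx ⊢
      exact deriv_nilpotent (d i) htf hx) with h | h
    · constructor
      intro x hx
      have : x ∈ nilradical R := mem_nilradical.mpr hx
      rw [h] at this
      exact (Submodule.mem_bot R).mp this
    · exfalso
      have : (1 : R) ∈ nilradical R := h ▸ Submodule.mem_top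
      rcases mem_nilradical.mp this with ⟨n, hn⟩
      rw [one_pow] at hn
      exact one_ne_zero hn
  have hnzd : NoZeroDivisors R := by
    constructor
    intro a b hab
    by_contra hcon
    push_neg at hcon
    obtain ⟨ha, hb⟩ := hcon
    set I : Ideal R :=
      { carrier := {z | a * z = 0}
        zero_mem' := by simp
        add_mem' := fun {y z} hy hz => by
          simp only [Set.mem_setOf_eq] at *
          rw [mul_add, hy, hz, add_zero]
        smul_mem' := fun r z hz => by
          simp only [Set.mem_setOf_eq, smul_eq_mul] at *
          rw [mul_left_comm, hz, mul_zero] } with hI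
    have hIdiff : ∀ i, ∀ z ∈ I, d i z ∈ I := by
      intro i z hz
      have hz' : a * z = 0 := hz
      have h1 := congrArg (d i) hz'
      rw [map_zero, Derivation.leibniz] at h1
      have h2 : a * (a * d i z) = 0 := by
        have := congrArg (a * ·) h1
        simp only [smul_eq_mul, mul_add, mul_zero] at this
        rw [show a * (z * d i a) = a * z * d i a from by ring, hz', zero_mul, add_zero] at this
        exact this
      have h3 : (a * d i z) ^ 2 = 0 := by
        rw [sq]
        rw [show a * d i z * (a * d i z) = a * (a * d i z) * d i z by ring, h2, zero_mul]
      have h4 : a * d i z = 0 := IsReduced.eq_zero _ ⟨2, h3⟩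
      exact h4
    rcases hs I hIdiff with h | h
    · have : b ∈ I := hab
      rw [h] at this
      exact hb ((Submodule.mem_bot R).mp this)
    · have : (1 : R) ∈ I := h ▸ Submodule.mem_top
      have : a * 1 = 0 := this
      rw [mul_one] at this
      exact ha this
  exact NoZeroDivisors.to_isDomain R

end Simple

section TensorDeriv
variable {F : Type*} [CommRing F] {K L : Type*} [CommRing K] [CommRing L]
  [Algebra F K] [Algebra F L]

/-- The `F`-linear map underlying an `F`-linear derivation. -/
def derivLinear (δ : Derivation ℤ K K)
    (hlin : ∀ (c : F) (x : K), δ (c • x) = c • δ x) : K →ₗ[F] K :=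
  { toFun := δ, map_add' := map_add δ, map_smul' := hlin }

/-- Base change of a derivation to `K ⊗[F] L`, acting on the left factor. -/
noncomputable def tensorDeriv (δ : Derivation ℤ K K)
    (hlin : ∀ (c : F) (x : K), δ (c • x) = c • δ x) :
    Derivation ℤ (K ⊗[F] L) (K ⊗[F] L) where
  toLinearMap := (LinearMap.rTensor L (derivLinear δ hlin)).restrictScalars ℤ
  map_one_eq_zero' := by
    simp only [LinearMap.coe_restrictScalars, Algebra.TensorProduct.one_def,
      LinearMap.rTensor_tmul]
    show (δ 1) ⊗ₜ[F] (1 : L) = 0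
    rw [Derivation.map_one_eq_zero, TensorProduct.zero_tmul]
  leibniz' := by
    intro a b
    show (LinearMap.rTensor L (derivLinear δ hlin)) (a * b) = a • (LinearMap.rTensor L (derivLinear δ hlin)) b + b • (LinearMap.rTensor L (derivLinear δ hlin)) a
    induction a with
    | zero => simp
    | tmul κ l =>
      induction b with
      | zero => simp
      | tmul κ' l' =>
        simp only [Algebra.TensorProduct.tmul_mul_tmul, LinearMap.rTensor_tmul, smul_eq_mul]
        show (δ (κ * κ')) ⊗ₜ[F] (l * l') = _ + _
        rw [Derivation.leibniz]
        simp only [smul_eq_mul, Algebra.TensorProduct.tmul_mul_tmul]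
        show (κ * δ κ' + κ' * δ κ) ⊗ₜ[F] (l * l') = _
        rw [TensorProduct.add_tmul]
        show _ = (κ * δ κ') ⊗ₜ[F] (l * l') + (κ' * δ κ) ⊗ₜ[F] (l' * l)
        rw [mul_comm l' l]
      | add u v hu hv =>
        rw [mul_add, map_add, hu, hv, map_add]
        simp only [smul_eq_mul, mul_add, add_mul]
        ring
    | add x y hx hy =>
      rw [add_mul, map_add, hx, hy, map_add]
      simp only [smul_eq_mul, mul_add, add_mul]
      ring

@[simp] lemma tensorDeriv_tmul (δ : Derivation ℤ K K)
    (hlin : ∀ (c : F) (x : K), δ (c • x) = c • δ x) (κ : K) (l : L) :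
    tensorDeriv δ hlin (κ ⊗ₜ[F] l) = (δ κ) ⊗ₜ[F] l := rfl

end TensorDeriv

section Key
variable {F : Type*} [Field F] {K L : Type*} [CommRing K] [Nontrivial K] [Field L]
  [Algebra F K] [Algebra F L] {Δ : Type*}

lemma tensor_simple (d : Δ → Derivation ℤ K K)
    (hlin : ∀ i (c : F) (x : K), d i (algebraMap F K c * x) = algebraMap F K c * d i x)
    (D : Δ → Derivation ℤ (K ⊗[F] L) (K ⊗[F] L))
    (hDt : ∀ i (κ : K) (l : L), D i (κ ⊗ₜ[F] l) = (d i κ) ⊗ₜ[F] l)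
    (hs : ∀ I : Ideal K, (∀ i, ∀ x ∈ I, d i x ∈ I) → I = ⊥ ∨ I = ⊤)
    (hconst : ∀ x : K, (∀ i, d i x = 0) → ∃ c : F, algebraMap F K c = x)
    (J : Ideal (K ⊗[F] L)) (hJD : ∀ i, ∀ x ∈ J, D i x ∈ J) : J = ⊥ ∨ J = ⊤ := by
  by_cases hJ : J = ⊥
  · exact Or.inl hJ
  right
  classical
  set b := Module.Basis.ofVectorSpace F L with hb
  set B := Algebra.TensorProduct.basis K b with hB
  have hrepr : ∀ (i : Δ) (y : K ⊗[F] L) j, B.repr (D i y) j = d i (B.repr y j) := by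
    intro i y j
    induction y with
    | zero => simp
    | tmul κ l =>
      rw [hDt, Algebra.TensorProduct.basis_repr_tmul, Algebra.TensorProduct.basis_repr_tmul]
      simp only [Finsupp.smul_apply, Finsupp.mapRange_apply, smul_eq_mul]
      rw [mul_comm κ, hlin i, mul_comm]
    | add u v hu hv => rw [map_add, map_add, map_add, Finsupp.add_apply, Finsupp.add_apply,
        map_add, hu, hv]
  have hsupp : ∀ (i : Δ) (y : K ⊗[F] L),
      (B.repr (D i y)).support ⊆ (B.repr y).support := by
    intro i y j hj
    rw [Finsupp.mem_support_iff] at hj ⊢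
    intro h0
    exact hj (by rw [hrepr, h0, map_zero])
  have hJ' : ∃ z ∈ J, z ≠ 0 := (Submodule.ne_bot_iff J).mp hJ
  set S : Set ℕ := {n | ∃ x, x ∈ J ∧ x ≠ 0 ∧ (B.repr x).support.card = n} with hS
  have hSne : S.Nonempty := by
    obtain ⟨x, hxJ, hx0⟩ := hJ'
    exact ⟨_, x, hxJ, hx0, rfl⟩
  obtain ⟨x, hxJ, hx0, hxcard⟩ := Nat.sInf_mem hSne
  have hxs : (B.repr x).support.Nonempty := by
    rw [Finsupp.support_nonempty_iff]
    intro h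
    exact hx0 (by rwa [LinearEquiv.map_eq_zero_iff] at h)
  obtain ⟨j₀, hj₀⟩ := hxs
  set I : Ideal K :=
    { carrier := {μ | ∃ y, y ∈ J ∧ (B.repr y).support ⊆ (B.repr x).support ∧ B.repr y j₀ = μ}
      zero_mem' := ⟨0, J.zero_mem, by simp⟩
      add_mem' := by
        rintro μ ν ⟨y, hyJ, hys, hyj⟩ ⟨z, hzJ, hzs, hzj⟩
        refine ⟨y + z, J.add_mem hyJ hzJ, ?_, ?_⟩
        · rw [map_add]
          exact (Finsupp.support_add).trans (Finset.union_subset hys hzs)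
        · rw [map_add, Finsupp.add_apply, hyj, hzj]
      smul_mem' := by
        rintro κ μ ⟨y, hyJ, hys, hyj⟩
        refine ⟨κ • y, ?_, ?_, ?_⟩
        · rw [Algebra.smul_def]
          exact Ideal.mul_mem_left J _ hyJ
        · rw [map_smul]
          exact (Finsupp.support_smul).trans hys
        · rw [map_smul, Finsupp.smul_apply, hyj] } with hI
  have hIΔ : ∀ i, ∀ μ ∈ I, d i μ ∈ I := by
    rintro i μ ⟨y, hyJ, hys, hyj⟩
    exact ⟨D i y, hJD i y hyJ, (hsupp i y).trans hys, by rw [hrepr, hyj]⟩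
  rcases hs I hIΔ with h | h
  · exfalso
    have hmem : B.repr x j₀ ∈ I := ⟨x, hxJ, subset_rfl, rfl⟩
    rw [h, Submodule.mem_bot] at hmem
    exact Finsupp.mem_support_iff.mp hj₀ hmem
  have hone : (1 : K) ∈ I := h ▸ Submodule.mem_top
  obtain ⟨y, hyJ, hys, hyj⟩ := hone
  have hy0 : y ≠ 0 := by
    intro h0
    rw [h0, map_zero] at hyj
    exact one_ne_zero hyj.symm
  have hDy : ∀ i, D i y = 0 := by
    intro i
    by_contra hne
    have hmemS : (B.repr (D i y)).support.card ∈ S := ⟨D i y, hJD i y hyJ, hne, rfl⟩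
    have hle := Nat.sInf_le hmemS
    have hsub : (B.repr (D i y)).support ⊆ (B.repr x).support.erase j₀ := by
      intro j hj
      rw [Finset.mem_erase]
      refine ⟨?_, ((hsupp i y).trans hys) hj⟩
      intro hjj
      subst hjj
      rw [Finsupp.mem_support_iff, hrepr, hyj, Derivation.map_one_eq_zero] at hj
      exact hj rfl
    have hlt : (B.repr (D i y)).support.card < sInf S := by
      calc (B.repr (D i y)).support.card ≤ ((B.repr x).support.erase j₀).card :=
            Finset.card_le_card hsub
        _ < (B.repr x).support.card := Finset.card_erase_lt_of_mem hj₀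
        _ = sInf S := hxcard
    omega
  have hcj : ∀ j, ∃ c : F, algebraMap F K c = B.repr y j := by
    intro j
    refine hconst _ (fun i => ?_)
    rw [← hrepr i y j, hDy i, map_zero, Finsupp.zero_apply]
  choose c hc using hcj
  set l₀ : L := ∑ j ∈ (B.repr y).support, c j • b j with hl₀
  have hyl : y = (1 : K) ⊗ₜ[F] l₀ := by
    apply B.repr.injective
    ext j
    rw [Algebra.TensorProduct.basis_repr_tmul]
    simp only [Finsupp.smul_apply, Finsupp.mapRange_apply, one_smul]
    have hbl : b.repr l₀ j = if j ∈ (B.repr y).support then c j else 0 := by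
      rw [hl₀, map_sum, Finsupp.finset_sum_apply]
      rw [Finset.sum_congr rfl (fun j' _ => by
        rw [map_smul, Module.Basis.repr_self, Finsupp.smul_apply, Finsupp.single_apply,
          smul_eq_mul, mul_ite, mul_one, mul_zero])]
      rw [Finset.sum_ite_eq' (B.repr y).support j c]
    rw [hbl]
    by_cases hj : j ∈ (B.repr y).support
    · rw [if_pos hj, hc]
    · rw [if_neg hj, map_zero]
      exact Finsupp.notMem_support_iff.mp hj
  have hl0 : l₀ ≠ 0 := by
    intro h0
    rw [h0, TensorProduct.tmul_zero] at hyl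
    exact hy0 hyl
  have hunit : IsUnit ((1 : K) ⊗ₜ[F] l₀ : K ⊗[F] L) := by
    refine IsUnit.of_mul_eq_one ((1 : K) ⊗ₜ[F] l₀⁻¹) ?_
    rw [Algebra.TensorProduct.tmul_mul_tmul, one_mul, mul_inv_cancel₀ hl0]
    rfl
  exact Ideal.eq_top_of_isUnit_mem J (hyl ▸ hyJ) hunit

end Key

section Dom
variable {F : Type*} [Field F] [CharZero F] {K L : Type*} [CommRing K] [Nontrivial K] [Field L]
  [Algebra F K] [Algebra F L] {Δ : Type*}

lemma tensor_isDomain' (d : Δ → Derivation ℤ K K)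
    (hlin : ∀ i (c : F) (x : K), d i (algebraMap F K c * x) = algebraMap F K c * d i x)
    (hs : ∀ I : Ideal K, (∀ i, ∀ x ∈ I, d i x ∈ I) → I = ⊥ ∨ I = ⊤)
    (hconst : ∀ x : K, (∀ i, d i x = 0) → ∃ c : F, algebraMap F K c = x)
    (hderiv : ∀ i : Δ, ∃ D : Derivation ℤ (K ⊗[F] L) (K ⊗[F] L),
      ∀ (κ : K) (l : L), D (κ ⊗ₜ[F] l) = (d i κ) ⊗ₜ[F] l) :
    IsDomain (K ⊗[F] L) := by
  classical
  haveI : Nontrivial (K ⊗[F] L) := by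
    let b := Module.Basis.ofVectorSpace F L
    let B := Algebra.TensorProduct.basis K b
    haveI : Nonempty ↑(Module.Basis.ofVectorSpaceIndex F L) := b.index_nonempty
    exact B.repr.toEquiv.nontrivial
  choose D hDt using hderiv
  refine simple_isDomain D ?_ ?_
  · intro n hn z hz
    have h1 : (n : F) • z = 0 := by rw [Nat.cast_smul_eq_nsmul]; exact hz
    have h2 : ((n : F)⁻¹ * (n : F)) • z = 0 := by rw [mul_smul, h1, smul_zero]
    rwa [inv_mul_cancel₀ (Nat.cast_ne_zero.mpr hn.ne'), one_smul] at h2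
  · exact fun J hJ => tensor_simple d hlin D hDt hs hconst J hJ

end Dom
section Aux
variable {F : Type*} [Field F] [CharZero F] {K : Type*} [CommRing K] [Nontrivial K]
  [Algebra F K] {Δ : Type*}

theorem prime_aux (d : Δ → Derivation ℤ K K)
    (hlin : ∀ i (c : F) (x : K), d i (algebraMap F K c * x) = algebraMap F K c * d i x)
    (hs : ∀ I : Ideal K, (∀ i, ∀ x ∈ I, d i x ∈ I) → I = ⊥ ∨ I = ⊤)
    (hconst : ∀ x : K, (∀ i, d i x = 0) → ∃ c : F, algebraMap F K c = x)
    {A : Type*} [CommRing A] [Algebra F A] (p : Ideal A) (hp : p.IsPrime) :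
    (p.map (inclLeft F A K)).IsPrime := by
  classical
  haveI := hp
  let L' := FractionRing (A ⧸ p)
  have hderiv : ∀ i : Δ, ∃ D' : Derivation ℤ (K ⊗[F] L') (K ⊗[F] L'),
      ∀ (κ : K) (l : L'), D' (κ ⊗ₜ[F] l) = (d i κ) ⊗ₜ[F] l := by
    intro i
    have hlin' : ∀ (c : F) (x : K), d i (c • x) = c • d i x := by
      intro c x
      rw [Algebra.smul_def, Algebra.smul_def]
      exact hlin i c x
    exact ⟨tensorDeriv (d i) hlin', fun κ l => rfl⟩
  haveI hdom1 : IsDomain (K ⊗[F] L') := tensor_isDomain' d hlin hs hconst hderiv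
  haveI hdom2 : IsDomain (L' ⊗[F] K) := by
    have e := Algebra.TensorProduct.comm F L' K
    exact Function.Injective.isDomain e.toAlgHom.toRingHom e.injective
  let f : A →ₐ[F] L' :=
    { toRingHom := (algebraMap (A ⧸ p) L').comp (Ideal.Quotient.mk p)
      commutes' := fun c => (IsScalarTower.algebraMap_apply F (A ⧸ p) L' c).symm }
  have hkerf : ∀ a : A, f a = 0 ↔ a ∈ p := by
    intro a
    show algebraMap (A ⧸ p) L' (Ideal.Quotient.mk p a) = 0 ↔ _
    rw [map_eq_zero_iff _ (IsFractionRing.injective (A ⧸ p) L'),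
      Ideal.Quotient.eq_zero_iff_mem]
  set q : Submodule F A := Submodule.restrictScalars F p with hq
  set fL : A →ₗ[F] L' := f.toLinearMap with hfL
  have hle1 : q ≤ LinearMap.ker fL := fun a ha => LinearMap.mem_ker.mpr ((hkerf a).mpr ha)
  have hle2 : LinearMap.ker fL ≤ q := fun a ha => (hkerf a).mp (LinearMap.mem_ker.mp ha)
  set g : (A ⧸ q) →ₗ[F] L' := q.liftQ fL hle1 with hgdef
  have hginj : LinearMap.ker g = ⊥ := Submodule.ker_liftQ_eq_bot q fL hle1 hle2
  have hcomp : LinearMap.rTensor K fL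
      = (LinearMap.rTensor K g).comp (LinearMap.rTensor K q.mkQ) := by
    rw [← LinearMap.rTensor_comp, Submodule.liftQ_mkQ]
  have hrtinj : LinearMap.ker (LinearMap.rTensor K g) = ⊥ := by
    rw [LinearMap.ker_eq_bot]
    exact Module.Flat.rTensor_preserves_injective_linearMap g (LinearMap.ker_eq_bot.mp hginj)
  have hkerEq : LinearMap.ker (LinearMap.rTensor K fL)
      = Submodule.restrictScalars F
          (Ideal.map (Algebra.TensorProduct.includeLeft : A →ₐ[F] A ⊗[F] K) p) := by
    rw [hcomp, LinearMap.ker_comp_of_ker_eq_bot _ hrtinj, rTensor_mkQ,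
      Ideal.map_includeLeft_eq]
  have hmapEq : Ideal.map (inclLeft F A K) p
      = Ideal.map (Algebra.TensorProduct.includeLeft : A →ₐ[F] A ⊗[F] K) p := rfl
  set Φ : A ⊗[F] K →ₐ[F] L' ⊗[F] K :=
    Algebra.TensorProduct.map f (AlgHom.id F K) with hΦdef
  have hΦ : ∀ z, Φ z = LinearMap.rTensor K fL z := by
    intro z
    induction z with
    | zero => simp
    | tmul a k => rfl
    | add u v hu hv => rw [map_add, map_add, hu, hv]
  have hiff : ∀ z, (z ∈ Ideal.map (Algebra.TensorProduct.includeLeft :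
      A →ₐ[F] A ⊗[F] K) p ↔ LinearMap.rTensor K fL z = 0) := by
    intro z
    have h1 : z ∈ Ideal.map (Algebra.TensorProduct.includeLeft : A →ₐ[F] A ⊗[F] K) p ↔
        z ∈ Submodule.restrictScalars F
          (Ideal.map (Algebra.TensorProduct.includeLeft : A →ₐ[F] A ⊗[F] K) p) := Iff.rfl
    rw [h1, ← hkerEq, LinearMap.mem_ker]
  have hker : Ideal.map (Algebra.TensorProduct.includeLeft : A →ₐ[F] A ⊗[F] K) p
      = RingHom.ker Φ.toRingHom := by
    ext z
    rw [hiff z, RingHom.mem_ker]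
    show LinearMap.rTensor K fL z = 0 ↔ Φ z = 0
    rw [hΦ z]
  rw [hmapEq, hker]
  exact RingHom.ker_isPrime Φ.toRingHom

end Aux

/-- Let `K` be a simple `Δ`-ring which is a `ℚ`-algebra, with field of constants `C`,
admitting a `C`-algebra homomorphism `φ : K → C`. Let `A` be a commutative `C`-algebra
and equip `A ⊗_C K` with the derivations `D i` characterized by
`D i (a ⊗ λ) = a ⊗ d i λ`. Then for every prime ideal `𝔭` of `A`, the ideal of
`A ⊗_C K` generated by `i(𝔭)` is a prime ideal and a `Δ`-ideal. -/
theorem stmt_12 {K Δ : Type*} [CommRing K] [Algebra ℚ K]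
    (d : Δ → Derivation ℤ K K)
    (hsimple : ∀ I : Ideal K, (∀ i, ∀ x ∈ I, d i x ∈ I) → I = ⊥ ∨ I = ⊤)
    (hC : IsField (constants d))
    (hφ : ∃ φ : K →+* constants d, ∀ c : constants d, φ ↑c = c)
    (A : Type*) [CommRing A] [Algebra (constants d) A]
    (D : Δ → Derivation ℤ (A ⊗[constants d] K) (A ⊗[constants d] K))
    (hD : ∀ i (a : A) (c : K), D i (a ⊗ₜ c) = a ⊗ₜ[constants d] (d i c)) :
    ∀ p : Ideal A, p.IsPrime →
      (p.map (inclLeft (constants d) A K)).IsPrime ∧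
      (∀ i, ∀ x ∈ p.map (inclLeft (constants d) A K),
        D i x ∈ p.map (inclLeft (constants d) A K)) := by
  intro p hp
  classical
  letI : Field (constants d) := hC.toField
  haveI : Nontrivial K :=
    ⟨⟨((0 : constants d) : K), ((1 : constants d) : K),
      fun h => zero_ne_one (α := constants d) (Subtype.coe_injective h)⟩⟩
  haveI : CharZero K := charZero_of_injective_algebraMap (algebraMap ℚ K).injective
  haveI : CharZero (constants d) := by
    constructor
    intro m n h
    have h2 : ((m : ℕ) : K) = ((n : ℕ) : K) := by
      have := congrArg (Subtype.val) h
      rwa [Subring.coe_natCast, Subring.coe_natCast] at this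
    exact Nat.cast_injective h2
  have hlin : ∀ i (c : constants d) (x : K),
      d i (algebraMap (constants d) K c * x) = algebraMap (constants d) K c * d i x := by
    intro i c x
    have hc : d i ((c : K)) = 0 := c.2 i
    show d i ((c : K) * x) = (c : K) * d i x
    rw [Derivation.leibniz, hc, smul_zero, add_zero, smul_eq_mul]
  have hconst : ∀ x : K, (∀ i, d i x = 0) → ∃ c : constants d,
      algebraMap (constants d) K c = x := fun x hx => ⟨⟨x, hx⟩, rfl⟩
  constructor
  · exact prime_aux d hlin hsimple hconst p hp
  · intro i x hx
    rw [Ideal.map, ← Ideal.submodule_span_eq] at hx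
    refine Submodule.span_induction ?_ ?_ ?_ ?_ hx
    · rintro w ⟨a, ha, rfl⟩
      have h2 : (inclLeft (constants d) A K) a = a ⊗ₜ[constants d] (1 : K) := rfl
      rw [h2, hD i a 1, (d i).map_one_eq_zero, TensorProduct.tmul_zero]
      exact zero_mem _
    · rw [map_zero]; exact zero_mem _
    · intro u v _ _ hDu hDv
      rw [map_add]; exact add_mem hDu hDv
    · intro r w hw hDw
      have hw' : w ∈ Ideal.map (inclLeft (constants d) A K) p := hw
      rw [smul_eq_mul, Derivation.leibniz, smul_eq_mul, smul_eq_mul]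
      exact add_mem (Ideal.mul_mem_left _ _ hDw) (Ideal.mul_mem_right _ _ hw')
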